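/- arXiv:2005.02243 — 2 statements merged into one kernel-verified Lean document; each statement's English description precedes it below -/
import Mathlib

section
/- Let Ψ = diag(ψ_1, …, ψ_m) be a diagonal inner multiplier on H²(𝔻, ℂ^m) and Θ ∈ H^∞(𝔻, L(ℂ^r, ℂ^m)) an inner multiplier with r ≤ m. Then (Ψ K_Θ)^⊥ is almost invariant for the forward shift S with defect at most m; explicitly, S (Ψ K_Θ)^⊥ ⊆ (Ψ K_Θ)^⊥ + span{Ψ e_1, …, Ψ e_m} where {e_i} is the standard basis of ℂ^m. -/
noncomputable section

open scoped ENNReal ComplexConjugate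
open ContinuousLinearMap

abbrev Cm (m : ℕ) := EuclideanSpace ℂ (Fin m)
abbrev H2 (m : ℕ) := lp (fun _ : ℕ => Cm m) 2

namespace Hardy

variable {m r : ℕ}

lemma two_toReal : (2 : ℝ≥0∞).toReal = 2 := by norm_num

def shiftFun (f : ℕ → Cm m) : ℕ → Cm m := fun n => match n with
  | 0 => 0
  | k + 1 => f k

lemma shift_memℓp (f : H2 m) : Memℓp (shiftFun (f : ∀ _, Cm m)) 2 := by
  rw [memℓp_gen_iff (by norm_num)]
  have hs : Summable fun n : ℕ => ‖(f : ∀ _, Cm m) n‖ ^ (2 : ℝ≥0∞).toReal :=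
    (lp.memℓp f).summable (by norm_num)
  have : Summable fun n : ℕ =>
      ‖shiftFun (f : ∀ _, Cm m) (n + 1)‖ ^ (2 : ℝ≥0∞).toReal := hs
  exact (summable_nat_add_iff 1).mp this

/-- The forward shift `S` on the vector-valued Hardy space (Taylor-coefficient model). -/
def S (m : ℕ) : H2 m →L[ℂ] H2 m :=
  LinearMap.mkContinuous
    { toFun := fun f => ⟨shiftFun (f : ∀ _, Cm m), shift_memℓp f⟩
      map_add' := by
        intro f g
        apply Subtype.ext
        have key : shiftFun (↑(f + g) : ∀ _, Cm m)
            = shiftFun (f : ∀ _, Cm m) + shiftFun (g : ∀ _, Cm m) := by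
          funext n
          have h : (shiftFun (f : ∀ _, Cm m) + shiftFun (g : ∀ _, Cm m)) n
              = shiftFun (f : ∀ _, Cm m) n + shiftFun (g : ∀ _, Cm m) n := rfl
          rw [h, lp.coeFn_add]
          cases n with
          | zero => simp [shiftFun]
          | succ k => simp [shiftFun]
        exact key
      map_smul' := by
        intro c f
        apply Subtype.ext
        have key : shiftFun (↑(c • f) : ∀ _, Cm m)
            = c • shiftFun (f : ∀ _, Cm m) := by
          funext n
          have h : (c • shiftFun (f : ∀ _, Cm m)) n
              = c • shiftFun (f : ∀ _, Cm m) n := rfl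
          rw [h, lp.coeFn_smul]
          cases n with
          | zero => simp [shiftFun]
          | succ k => simp [shiftFun]
        exact key }
    1
    (by
      intro f
      simp only [one_mul]
      apply le_of_eq
      have h2 : (0:ℝ) < (2 : ℝ≥0∞).toReal := by norm_num
      rw [lp.norm_eq_tsum_rpow h2, lp.norm_eq_tsum_rpow h2]
      congr 1
      have hsum : Summable fun n : ℕ =>
          ‖shiftFun (f : ∀ _, Cm m) n‖ ^ (2 : ℝ≥0∞).toReal := by
        rw [← memℓp_gen_iff (by norm_num)]; exact shift_memℓp f
      have key : ∑' n : ℕ, ‖shiftFun (f : ∀ _, Cm m) n‖ ^ (2 : ℝ≥0∞).toReal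
          = ∑' n : ℕ, ‖(f : ∀ _, Cm m) n‖ ^ (2 : ℝ≥0∞).toReal := by
        rw [hsum.tsum_eq_zero_add]
        simp [shiftFun]
      exact key)

/-- The backward shift `S*` (the adjoint of the forward shift). -/
def Sadj (m : ℕ) : H2 m →L[ℂ] H2 m := ContinuousLinearMap.adjoint (S m)

/-- `T` is a multiplier (multiplication by an operator-valued analytic function),
characterized by intertwining the shifts. -/
def IsMultiplier (T : H2 r →L[ℂ] H2 m) : Prop := S m ∘L T = T ∘L S r

/-- `T` is (the multiplication operator of) an inner multiplier: an isometric multiplier. -/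
def IsInnerMultiplier (T : H2 r →L[ℂ] H2 m) : Prop :=
  (∀ f, ‖T f‖ = ‖f‖) ∧ IsMultiplier T

/-- The model space `K_Θ = H² ⊖ Θ H²`. -/
def modelSpace (T : H2 r →L[ℂ] H2 m) : Submodule ℂ (H2 m) := (LinearMap.range (T : H2 r →ₗ[ℂ] H2 m))ᗮ

/-- The constant function with value `v` (Taylor coefficients `(v,0,0,…)`). -/
def const (v : Cm m) : H2 m := lp.single 2 0 v

/-- The constant function `eᵢ`. -/
def e (m : ℕ) (i : Fin m) : H2 m := const (EuclideanSpace.single i 1)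

lemma coord_norm_le (x : Cm m) (i : Fin m) : ‖x i‖ ≤ ‖x‖ := by
  rw [EuclideanSpace.norm_eq]
  have h1 : ‖x i‖ = Real.sqrt (‖x i‖ ^ 2) := by
    rw [Real.sqrt_sq (norm_nonneg _)]
  rw [h1]
  apply Real.sqrt_le_sqrt
  exact Finset.single_le_sum (f := fun j => ‖x j‖ ^ 2)
    (fun j _ => by positivity) (Finset.mem_univ i)

lemma coord_memℓp (i : Fin m) (f : H2 m) :
    Memℓp (fun n => EuclideanSpace.single (0 : Fin 1) ((f : ∀ _, Cm m) n i)) 2 := by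
  rw [memℓp_gen_iff (by norm_num)]
  have hs : Summable fun n : ℕ => ‖(f : ∀ _, Cm m) n‖ ^ (2 : ℝ≥0∞).toReal :=
    (lp.memℓp f).summable (by norm_num)
  apply Summable.of_nonneg_of_le (fun n => by positivity) _ hs
  intro n
  have : ‖EuclideanSpace.single (0 : Fin 1) ((f : ∀ _, Cm m) n i)‖
      = ‖(f : ∀ _, Cm m) n i‖ := by
    simp [EuclideanSpace.norm_single]
  rw [this]
  have h := coord_norm_le ((f : ∀ _, Cm m) n) i
  exact Real.rpow_le_rpow (norm_nonneg _) h (by norm_num)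

/-- The `i`-th coordinate (column) of a `ℂᵐ`-valued Hardy space function, as a scalar
Hardy space function. -/
def coord (i : Fin m) (f : H2 m) : H2 1 :=
  ⟨fun n => EuclideanSpace.single (0 : Fin 1) ((f : ∀ _, Cm m) n i), coord_memℓp i f⟩

/-- A multiplier on `H²(𝔻, ℂᵐ)` is diagonal, `Ψ = diag(ψ₁, …, ψ_m)`, with scalar
multipliers `ψᵢ` represented by the operators `t i`. -/
def IsDiagonal (T : H2 m →L[ℂ] H2 m) (t : Fin m → (H2 1 →L[ℂ] H2 1)) : Prop :=
  ∀ (f : H2 m) (i : Fin m), coord i (T f) = t i (coord i f)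

/-- The analytic function on the disc associated to a scalar Hardy space element. -/
def toFun (f : H2 1) (z : ℂ) : ℂ := ∑' n : ℕ, ((f : ∀ _, Cm 1) n 0) * z ^ n

/-- `F` is a finite Blaschke product on the unit disc. -/
def IsFiniteBlaschke (F : ℂ → ℂ) : Prop :=
  ∃ (k : ℕ) (c : ℂ) (a : Fin k → ℂ), ‖c‖ = 1 ∧ (∀ i, ‖a i‖ < 1) ∧
    ∀ z ∈ Metric.ball (0 : ℂ) 1,
      F z = c * ∏ i, (z - a i) / (1 - (starRingEnd ℂ) (a i) * z)

/-- `W = M ⊖ (M ∩ zH²)`. -/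
def Wspace (M : Submodule ℂ (H2 m)) : Submodule ℂ (H2 m) :=
  M ⊓ (M ⊓ LinearMap.range (S m : H2 m →ₗ[ℂ] H2 m))ᗮ

end Hardy

namespace Hardy

variable {m r : ℕ}

local notation "⟪" x ", " y "⟫" => @inner ℂ _ _ x y

lemma S_apply (f : H2 m) : ((S m f : H2 m) : ∀ _ : ℕ, Cm m) = shiftFun (f : ∀ _ : ℕ, Cm m) := rfl

lemma S_norm (f : H2 m) : ‖S m f‖ = ‖f‖ := by
  have h2 : (0:ℝ) < (2 : ℝ≥0∞).toReal := by norm_num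
  rw [lp.norm_eq_tsum_rpow h2, lp.norm_eq_tsum_rpow h2]
  congr 1
  have hsum : Summable fun n : ℕ =>
      ‖shiftFun (f : ∀ _, Cm m) n‖ ^ (2 : ℝ≥0∞).toReal := by
    rw [← memℓp_gen_iff (by norm_num)]; exact shift_memℓp f
  calc ∑' n : ℕ, ‖(S m f : ∀ _, Cm m) n‖ ^ (2 : ℝ≥0∞).toReal
      = ∑' n : ℕ, ‖shiftFun (f : ∀ _, Cm m) n‖ ^ (2 : ℝ≥0∞).toReal := rfl
    _ = ∑' n : ℕ, ‖(f : ∀ _, Cm m) n‖ ^ (2 : ℝ≥0∞).toReal := by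
        rw [hsum.tsum_eq_zero_add]; simp [shiftFun]

lemma inner_S_S (x y : H2 m) : ⟪S m x, S m y⟫ = ⟪x, y⟫ :=
  LinearIsometry.inner_map_map ⟨(S m).toLinearMap, S_norm⟩ x y

lemma Sadj_S (g : H2 m) : Sadj m (S m g) = g := by
  apply ext_inner_left ℂ
  intro x
  simp only [Sadj]
  rw [ContinuousLinearMap.adjoint_inner_right]
  exact inner_S_S x g

lemma leftShift_memℓp (f : H2 m) : Memℓp (fun n => (f : ∀ _ : ℕ, Cm m) (n + 1)) 2 := by
  rw [memℓp_gen_iff (by norm_num : (0:ℝ) < (2 : ℝ≥0∞).toReal)]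
  exact (summable_nat_add_iff 1).2 ((lp.memℓp f).summable (by norm_num))

def leftShift (f : H2 m) : H2 m :=
  ⟨fun n => (f : ∀ _ : ℕ, Cm m) (n + 1), leftShift_memℓp f⟩

lemma decomp (f : H2 m) : f = const ((f : ∀ _ : ℕ, Cm m) 0) + S m (leftShift f) := by
  apply Subtype.ext
  funext n
  have h : ((const ((f : ∀ _ : ℕ, Cm m) 0) + S m (leftShift f) : H2 m) : ∀ _ : ℕ, Cm m) n
      = (const ((f : ∀ _ : ℕ, Cm m) 0) : ∀ _ : ℕ, Cm m) n
        + (S m (leftShift f) : ∀ _ : ℕ, Cm m) n := by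
    rw [lp.coeFn_add]; rfl
  rw [h, S_apply]
  cases n with
  | zero =>
      have hz : shiftFun ((leftShift f : H2 m) : ∀ _ : ℕ, Cm m) 0 = 0 := rfl
      rw [hz, add_zero]
      exact (lp.single_apply_self (E := fun _ : ℕ => Cm m) 2 0 ((f : ∀ _ : ℕ, Cm m) 0)).symm
  | succ k =>
      have h1 : (const ((f : ∀ _ : ℕ, Cm m) 0) : ∀ _ : ℕ, Cm m) (k + 1) = 0 :=
        lp.single_apply_ne 2 0 _ (Nat.succ_ne_zero k)
      rw [h1, zero_add]
      rfl

lemma Sadj_const (v : Cm m) : Sadj m (const v) = 0 := by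
  apply ext_inner_left ℂ
  intro x
  simp only [Sadj]
  rw [ContinuousLinearMap.adjoint_inner_right, inner_zero_right]
  rw [const, lp.inner_single_right]
  have h0 : (S m x : ∀ _ : ℕ, Cm m) 0 = 0 := rfl
  show ⟪(S m x : ∀ _ : ℕ, Cm m) 0, v⟫ = 0
  rw [h0, inner_zero_left]

lemma Sadj_eq (f : H2 m) : Sadj m f = leftShift f := by
  conv_lhs => rw [decomp f]
  rw [map_add, Sadj_const, Sadj_S, zero_add]

lemma const_eq_sum (v : Cm m) : const v = ∑ i, v i • e m i := by
  classical
  apply Subtype.ext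
  funext n
  have h : ((∑ i, v i • e m i : H2 m) : ∀ _ : ℕ, Cm m) n
      = ∑ i, v i • ((e m i : H2 m) : ∀ _ : ℕ, Cm m) n := by
    rw [lp.coeFn_sum, Finset.sum_apply]
    exact Finset.sum_congr rfl fun i _ => congrFun (lp.coeFn_smul _ _) n
  rw [h]
  cases n with
  | zero =>
      simp only [e, const, lp.single_apply_self]
      ext j
      have : (∑ i, v i • (EuclideanSpace.single i (1:ℂ) : Cm m)) j
          = ∑ i, v i • ((EuclideanSpace.single i (1:ℂ) : Cm m) j) := by
        rw [WithLp.ofLp_sum]; exact Finset.sum_apply j Finset.univ _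
      rw [this]
      simp [EuclideanSpace.single_apply]
  | succ k =>
      have h1 : (const v : ∀ _ : ℕ, Cm m) (k + 1) = 0 :=
        lp.single_apply_ne 2 0 _ (Nat.succ_ne_zero k)
      have h2 : ∀ i : Fin m, ((e m i : H2 m) : ∀ _ : ℕ, Cm m) (k + 1) = 0 := fun i =>
        lp.single_apply_ne 2 0 _ (Nat.succ_ne_zero k)
      rw [h1]
      simp [h2]

lemma modelSpace_Sadj (Θ : H2 r →L[ℂ] H2 m) (hΘ : IsMultiplier Θ)
    {k : H2 m} (hk : k ∈ modelSpace Θ) : Sadj m k ∈ modelSpace Θ := by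
  rw [modelSpace, Submodule.mem_orthogonal] at hk ⊢
  rintro _ ⟨g, rfl⟩
  simp only [Sadj]
  rw [ContinuousLinearMap.adjoint_inner_right]
  have h : S m (Θ g) = Θ (S r g) := congrArg (fun T => T g) hΘ
  rw [ContinuousLinearMap.coe_coe, h]
  exact hk _ ⟨S r g, rfl⟩

end Hardy

open Hardy in
/-- For a diagonal inner multiplier `Ψ` and an inner multiplier `Θ : H²(ℂ^r) → H²(ℂᵐ)`
with `r ≤ m`, `(Ψ K_Θ)ᗮ` is almost invariant for the shift with defect at most `m`:
`S (Ψ K_Θ)ᗮ ⊆ (Ψ K_Θ)ᗮ + span{Ψ e₁, …, Ψ e_m}`. -/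
theorem stmt_7 (m r : ℕ) (hr : r ≤ m)
    (Ψ : H2 m →L[ℂ] H2 m) (ψ : Fin m → (H2 1 →L[ℂ] H2 1))
    (hΨ : IsInnerMultiplier Ψ) (hdiag : IsDiagonal Ψ ψ)
    (hψ : ∀ i, IsInnerMultiplier (ψ i))
    (Θ : H2 r →L[ℂ] H2 m) (hΘ : IsInnerMultiplier Θ) :
    ∀ f ∈ ((modelSpace Θ).map (Ψ : H2 m →ₗ[ℂ] H2 m))ᗮ,
      S m f ∈ ((modelSpace Θ).map (Ψ : H2 m →ₗ[ℂ] H2 m))ᗮ ⊔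
        Submodule.span ℂ (Set.range fun i : Fin m => Ψ (e m i)) := by
  classical
  intro f hf
  have hPsiS : ∀ x : H2 m, Ψ (S m x) = S m (Ψ x) := fun x =>
    (congrArg (fun T => T x) hΨ.2).symm
  have hΨiso : ∀ x y : H2 m, @inner ℂ _ _ (Ψ x) (Ψ y) = @inner ℂ _ _ x y := fun x y =>
    LinearIsometry.inner_map_map ⟨Ψ.toLinearMap, hΨ.1⟩ x y
  set c : H2 m := ∑ i, (@inner ℂ _ _ (Ψ (e m i)) (S m f)) • Ψ (e m i) with hc
  have hcmem : c ∈ Submodule.span ℂ (Set.range fun i : Fin m => Ψ (e m i)) :=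
    Submodule.sum_mem _ fun i _ =>
      Submodule.smul_mem _ _ (Submodule.subset_span ⟨i, rfl⟩)
  have hmem : S m f - c ∈ ((modelSpace Θ).map (Ψ : H2 m →ₗ[ℂ] H2 m))ᗮ := by
    rw [Submodule.mem_orthogonal]
    rintro u hu
    obtain ⟨k, hk, rfl⟩ := Submodule.mem_map.1 hu
    set k0 : Cm m := (k : ∀ _ : ℕ, Cm m) 0 with hk0def
    have hk0 : Ψ k = Ψ (const k0) + S m (Ψ (leftShift k)) := by
      conv_lhs => rw [decomp k]
      rw [map_add, hPsiS]
    have hterm2 : @inner ℂ _ _ (S m (Ψ (leftShift k))) (S m f) = 0 := by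
      rw [inner_S_S]
      have hmem2 : Ψ (leftShift k) ∈ (modelSpace Θ).map (Ψ : H2 m →ₗ[ℂ] H2 m) := by
        refine Submodule.mem_map.2 ⟨leftShift k, ?_, rfl⟩
        rw [← Sadj_eq]
        exact modelSpace_Sadj Θ hΘ.2 hk
      exact (Submodule.mem_orthogonal _ _).1 hf _ hmem2
    have hconst : @inner ℂ _ _ (Ψ (const k0)) (S m f)
        = ∑ i, conj (k0 i) * @inner ℂ _ _ (Ψ (e m i)) (S m f) := by
      rw [const_eq_sum, map_sum, sum_inner]
      refine Finset.sum_congr rfl fun i _ => ?_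
      rw [map_smul, inner_smul_left]
    have hA : @inner ℂ _ _ (Ψ k) (S m f)
        = ∑ i, conj (k0 i) * @inner ℂ _ _ (Ψ (e m i)) (S m f) := by
      rw [hk0, inner_add_left, hterm2, add_zero, hconst]
    have hB : @inner ℂ _ _ (Ψ k) c
        = ∑ i, @inner ℂ _ _ (Ψ (e m i)) (S m f) * conj (k0 i) := by
      rw [hc, inner_sum]
      refine Finset.sum_congr rfl fun i _ => ?_
      rw [inner_smul_right, hΨiso]
      have : @inner ℂ _ _ k (e m i) = conj (k0 i) := by
        rw [e, Hardy.const, lp.inner_single_right]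
        have : @inner ℂ _ _ ((k : ∀ _ : ℕ, Cm m) 0) (EuclideanSpace.single i (1:ℂ))
            = (1:ℂ) * conj (k0 i) := EuclideanSpace.inner_single_right i 1 _
        rw [this, one_mul]
      rw [this]
    rw [inner_sub_right, ContinuousLinearMap.coe_coe, hA, hB, sub_eq_zero]
    exact Finset.sum_congr rfl fun i _ => mul_comm _ _
  have := Submodule.add_mem_sup hmem hcmem
  simpa using this
end
end

section
/- Let Θ = diag(θ_1, …, θ_m) be a diagonal inner multiplier on H²(𝔻, ℂ^m) with Θ(0) = 0 (equivalently θ_i(0) = 0 for all i) and with at least one θ_j not a finite Blaschke product. Then the subspace (Θ K_Θ)^⊥ ⊆ H²(𝔻, ℂ^m) is NOT nearly invariant for the backward shift S*: there exists F ∈ (Θ K_Θ)^⊥ with F(0) = 0 but S*F ∉ (Θ K_Θ)^⊥. In fact F = Θ² e_j is such a function. -/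
noncomputable section

open scoped ENNReal ComplexConjugate
open ContinuousLinearMap

namespace Hardy

local notation "⟪" x ", " y "⟫" => @inner ℂ _ _ x y

variable {m : ℕ}

def tailFun (f : ℕ → Cm m) : ℕ → Cm m := fun n => f (n + 1)

lemma tail_memℓp (f : H2 m) : Memℓp (tailFun (f : ∀ _, Cm m)) 2 := by
  rw [memℓp_gen_iff (by norm_num)]
  have hs : Summable fun n : ℕ => ‖(f : ∀ _, Cm m) n‖ ^ (2 : ℝ≥0∞).toReal :=
    (lp.memℓp f).summable (by norm_num)
  exact (summable_nat_add_iff 1).mpr hs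

def tail (f : H2 m) : H2 m := ⟨tailFun (f : ∀ _, Cm m), tail_memℓp f⟩

lemma S_coe (f : H2 m) : ((S m f : H2 m) : ∀ _, Cm m) = shiftFun (f : ∀ _, Cm m) := rfl

lemma inner_S (g f : H2 m) : ⟪S m g, f⟫ = ⟪g, tail f⟫ := by
  rw [lp.inner_eq_tsum, lp.inner_eq_tsum,
    (lp.summable_inner (𝕜 := ℂ) (S m g) f).tsum_eq_zero_add]
  have h0 : ⟪(S m g : H2 m) 0, (f : ∀ _, Cm m) 0⟫ = 0 := by
    have : (S m g : H2 m) 0 = 0 := rfl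
    rw [this, inner_zero_left]
  rw [h0, zero_add]
  rfl

lemma Sadj_eq_tail (f : H2 m) : Sadj m f = tail f :=
  ext_inner_left ℂ fun g => by
    rw [Sadj, ContinuousLinearMap.adjoint_inner_right, inner_S]

lemma S_tail (f : H2 m) (hf : (f : ∀ _, Cm m) 0 = 0) : S m (tail f) = f := by
  apply Subtype.ext
  funext n
  cases n with
  | zero => exact hf.symm
  | succ k => rfl

lemma mult_apply {Θ : H2 m →L[ℂ] H2 m} (hΘ : IsMultiplier Θ) (f : H2 m) :
    S m (Θ f) = Θ (S m f) := by
  have h := congrFun (congrArg DFunLike.coe hΘ) f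
  simpa using h

/-- `Θ` as a linear isometry. -/
def toIso {Θ : H2 m →L[ℂ] H2 m} (hΘ : IsInnerMultiplier Θ) : H2 m →ₗᵢ[ℂ] H2 m :=
  ⟨Θ.toLinearMap, hΘ.1⟩

lemma toIso_apply {Θ : H2 m →L[ℂ] H2 m} (hΘ : IsInnerMultiplier Θ) (f : H2 m) :
    toIso hΘ f = Θ f := rfl

lemma range_closed {Θ : H2 m →L[ℂ] H2 m} (hΘ : IsInnerMultiplier Θ) :
    IsClosed (LinearMap.range (Θ : H2 m →ₗ[ℂ] H2 m) : Set (H2 m)) := by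
  have hiso : Isometry Θ := AddMonoidHomClass.isometry_of_norm Θ hΘ.1
  have : (LinearMap.range (Θ : H2 m →ₗ[ℂ] H2 m) : Set (H2 m)) = Set.range ⇑Θ := LinearMap.coe_range _
  rw [this]
  exact hiso.isClosedEmbedding.isClosed_range

lemma model_orth {Θ : H2 m →L[ℂ] H2 m} (hΘ : IsInnerMultiplier Θ) :
    (modelSpace Θ)ᗮ = LinearMap.range (Θ : H2 m →ₗ[ℂ] H2 m) := by
  rw [modelSpace, Submodule.orthogonal_orthogonal_eq_closure,
    (range_closed hΘ).submodule_topologicalClosure_eq]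

/-- coefficient extraction for coordinates. -/
lemma coord_coe (i : Fin m) (f : H2 m) (n : ℕ) :
    ((coord i f : H2 1) : ∀ _, Cm 1) n 0 = (f : ∀ _, Cm m) n i := rfl

lemma coord_e_self (j : Fin m) : coord j (e m j) = e 1 0 := by
  apply Subtype.ext
  funext n
  ext k
  fin_cases k
  cases n with
  | zero =>
    show EuclideanSpace.single (0 : Fin 1) (((e m j : H2 m) : ∀ _, Cm m) 0 j) 0
        = ((e 1 0 : H2 1) : ∀ _, Cm 1) 0 0
    simp [e, const, lp.single_apply_self, EuclideanSpace.single_apply]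
  | succ p =>
    show EuclideanSpace.single (0 : Fin 1) (((e m j : H2 m) : ∀ _, Cm m) (p+1) j) 0
        = ((e 1 0 : H2 1) : ∀ _, Cm 1) (p+1) 0
    have h1 : ((e m j : H2 m) : ∀ _, Cm m) (p+1) = 0 :=
      lp.single_apply_ne 2 0 _ (Nat.succ_ne_zero p)
    have h2 : ((e 1 0 : H2 1) : ∀ _, Cm 1) (p+1) = 0 :=
      lp.single_apply_ne 2 0 _ (Nat.succ_ne_zero p)
    rw [h1, h2]
    simp

lemma coord_e_ne (i j : Fin m) (hij : i ≠ j) : coord i (e m j) = 0 := by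
  apply Subtype.ext
  funext n
  ext k
  fin_cases k
  show EuclideanSpace.single (0 : Fin 1) (((e m j : H2 m) : ∀ _, Cm m) n i) 0
      = ((0 : H2 1) : ∀ _, Cm 1) n 0
  have : ((e m j : H2 m) : ∀ _, Cm m) n i = 0 := by
    cases n with
    | zero =>
      have : ((e m j : H2 m) : ∀ _, Cm m) 0 = EuclideanSpace.single j 1 :=
        lp.single_apply_self 2 0 _
      rw [this, EuclideanSpace.single_apply, if_neg hij]
    | succ p =>
      have : ((e m j : H2 m) : ∀ _, Cm m) (p+1) = 0 :=
        lp.single_apply_ne 2 0 _ (Nat.succ_ne_zero p)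
      rw [this]; rfl
  rw [this]
  simp

/-- `(Θ e_j)(0) = 0`. -/
lemma Theta_e_zero {Θ : H2 m →L[ℂ] H2 m} (θ : Fin m → (H2 1 →L[ℂ] H2 1))
    (hdiag : IsDiagonal Θ θ)
    (h0 : ∀ i, ((θ i (e 1 0) : H2 1) : ∀ _ : ℕ, Cm 1) 0 = 0) (j : Fin m) :
    ((Θ (e m j) : H2 m) : ∀ _, Cm m) 0 = 0 := by
  ext i
  have key : ((coord i (Θ (e m j)) : H2 1) : ∀ _, Cm 1) 0 0 = 0 := by
    rw [hdiag (e m j) i]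
    by_cases hij : i = j
    · subst hij
      rw [coord_e_self]
      rw [h0 i]
      rfl
    · rw [coord_e_ne i j hij, map_zero]
      rfl
  rw [coord_coe] at key
  exact key

end Hardy

open Hardy in
/-- If `Θ = diag(θ₁, …, θ_m)` is a diagonal inner multiplier with `Θ(0) = 0` and some `θⱼ`
not a finite Blaschke product, then `(Θ K_Θ)ᗮ` is not nearly `S*`-invariant; in fact
`F = Θ² eⱼ` lies in `(Θ K_Θ)ᗮ`, vanishes at `0`, but `S*F ∉ (Θ K_Θ)ᗮ`. -/
theorem stmt_8 (m : ℕ) (j : Fin m)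
    (Θ : H2 m →L[ℂ] H2 m) (θ : Fin m → (H2 1 →L[ℂ] H2 1))
    (hΘ : IsInnerMultiplier Θ) (hdiag : IsDiagonal Θ θ)
    (hθ : ∀ i, IsInnerMultiplier (θ i))
    (h0 : ∀ i, ((θ i (e 1 0) : H2 1) : ∀ _ : ℕ, Cm 1) 0 = 0)
    (hbl : ¬ IsFiniteBlaschke (toFun (θ j (e 1 0)))) :
    Θ (Θ (e m j)) ∈ ((modelSpace Θ).map (Θ : H2 m →ₗ[ℂ] H2 m))ᗮ ∧
    ((Θ (Θ (e m j)) : H2 m) : ∀ _ : ℕ, Cm m) 0 = 0 ∧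
    Sadj m (Θ (Θ (e m j))) ∉ ((modelSpace Θ).map (Θ : H2 m →ₗ[ℂ] H2 m))ᗮ := by

  have hTzero : ((Θ (e m j) : H2 m) : ∀ _, Cm m) 0 = 0 := Theta_e_zero θ hdiag h0 j
  have hinner : ∀ f g : H2 m, @inner ℂ _ _ (Θ f) (Θ g) = @inner ℂ _ _ f g := fun f g =>
    (toIso hΘ).inner_map_map f g
  refine ⟨?_, ?_, ?_⟩
  · rw [Submodule.mem_orthogonal]
    rintro u hu
    rw [Submodule.mem_map] at hu
    obtain ⟨k, hk, rfl⟩ := hu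
    rw [show (Θ : H2 m →ₗ[ℂ] H2 m) k = Θ k from rfl, hinner]
    rw [modelSpace, Submodule.mem_orthogonal] at hk
    exact inner_eq_zero_symm.mp (hk (Θ (e m j)) (LinearMap.mem_range_self _ _))
  · have : Θ (Θ (e m j)) = S m (Θ (tail (Θ (e m j)))) := by
      rw [mult_apply hΘ.2, S_tail _ hTzero]
    rw [this]
    rfl
  · intro hmem
    rw [Submodule.mem_orthogonal] at hmem
    have hkey : Sadj m (Θ (e m j)) ∈ (modelSpace Θ)ᗮ := by
      rw [Submodule.mem_orthogonal]
      intro k hk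
      have h1 : @inner ℂ _ _ (Θ k) (Sadj m (Θ (Θ (e m j)))) = 0 :=
        hmem (Θ k) (Submodule.mem_map_of_mem hk)
      calc @inner ℂ _ _ k (Sadj m (Θ (e m j)))
          = @inner ℂ _ _ (S m k) (Θ (e m j)) := by
            rw [Sadj, ContinuousLinearMap.adjoint_inner_right]
        _ = @inner ℂ _ _ (Θ (S m k)) (Θ (Θ (e m j))) := (hinner _ _).symm
        _ = @inner ℂ _ _ (S m (Θ k)) (Θ (Θ (e m j))) := by rw [mult_apply hΘ.2]
        _ = @inner ℂ _ _ (Θ k) (Sadj m (Θ (Θ (e m j)))) := by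
            rw [Sadj, ContinuousLinearMap.adjoint_inner_right]
        _ = 0 := h1
    rw [model_orth hΘ] at hkey
    obtain ⟨G, hG⟩ := hkey
    have h2 : Θ (S m G) = Θ (e m j) := by
      rw [← mult_apply hΘ.2, show Θ G = _ from hG, Sadj_eq_tail, S_tail _ hTzero]
    have h3 : S m G = e m j := (toIso hΘ).injective h2
    have h4 : ((S m G : H2 m) : ∀ _, Cm m) 0 j = ((e m j : H2 m) : ∀ _, Cm m) 0 j := by
      rw [h3]
    have h5 : ((S m G : H2 m) : ∀ _, Cm m) 0 j = 0 := rfl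
    have h6 : ((e m j : H2 m) : ∀ _, Cm m) 0 j = 1 := by
      have : ((e m j : H2 m) : ∀ _, Cm m) 0 = EuclideanSpace.single j 1 :=
        lp.single_apply_self 2 0 _
      rw [this, EuclideanSpace.single_apply, if_pos rfl]
    rw [h5, h6] at h4
    exact one_ne_zero h4.symm
end
end
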